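/- Let C be an algebraically closed field and α ∈ C* not a root of unity. The Zariski closure of the subgroup of GL_2(C) generated by [[α,0],[0,1]] and [[α,1],[0,1]] equals the Borel-type group {[[a,b],[0,1]] : a ∈ C*, b ∈ C}. -/

import Mathlib

private lemma stmt10_mul_aux {C : Type*} [Field C] (a : Cˣ) (b : C) :
    (!![(a : C), b; 0, 1] : Matrix (Fin 2) (Fin 2) C) *
      !![((a⁻¹ : Cˣ) : C), -(((a⁻¹ : Cˣ) : C) * b); 0, 1] = 1 := by
  ext i j
  fin_cases i <;> fin_cases j <;>
    simp [Matrix.mul_apply, Fin.sum_univ_two]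

private lemma stmt10_mul_aux' {C : Type*} [Field C] (a : Cˣ) (b : C) :
    (!![((a⁻¹ : Cˣ) : C), -(((a⁻¹ : Cˣ) : C) * b); 0, 1] : Matrix (Fin 2) (Fin 2) C) *
      !![(a : C), b; 0, 1] = 1 := by
  ext i j
  fin_cases i <;> fin_cases j <;>
    simp [Matrix.mul_apply, Fin.sum_univ_two]

def stmt10Borel {C : Type*} [Field C] (a : Cˣ) (b : C) : GL (Fin 2) C :=
  ⟨!![(a : C), b; 0, 1], !![((a⁻¹ : Cˣ) : C), -(((a⁻¹ : Cˣ) : C) * b); 0, 1],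
    stmt10_mul_aux a b, stmt10_mul_aux' a b⟩

lemma stmt10Borel_val {C : Type*} [Field C] (a : Cˣ) (b : C) :
    ((stmt10Borel a b : GL (Fin 2) C) : Matrix (Fin 2) (Fin 2) C) = !![(a : C), b; 0, 1] := rfl

lemma stmt10Borel_mul {C : Type*} [Field C] (a a' : Cˣ) (b b' : C) :
    stmt10Borel a b * stmt10Borel a' b' = stmt10Borel (a * a') ((a : C) * b' + b) := by
  apply Units.ext
  show (_ * _ : Matrix (Fin 2) (Fin 2) C) = _
  rw [stmt10Borel_val, stmt10Borel_val, stmt10Borel_val, Matrix.mul_fin_two]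
  norm_num

lemma stmt10Borel_one {C : Type*} [Field C] : (stmt10Borel 1 0 : GL (Fin 2) C) = 1 := by
  apply Units.ext
  rw [stmt10Borel_val]
  show _ = (1 : Matrix (Fin 2) (Fin 2) C)
  rw [Matrix.one_fin_two]
  norm_num

lemma stmt10Borel_inv {C : Type*} [Field C] (a : Cˣ) (b : C) :
    (stmt10Borel a b)⁻¹ = stmt10Borel a⁻¹ (-(((a⁻¹ : Cˣ) : C) * b)) :=
  Units.ext rfl

lemma stmt10Borel_pow {C : Type*} [Field C] (a : Cˣ) (n : ℕ) :
    (stmt10Borel a 0 : GL (Fin 2) C) ^ n = stmt10Borel (a ^ n) 0 := by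
  induction n with
  | zero => simpa using stmt10Borel_one.symm
  | succ n ih => rw [pow_succ, ih, stmt10Borel_mul, ← pow_succ]; norm_num

lemma stmt10_mem {C : Type*} [Field C] (α : Cˣ) (A B : GL (Fin 2) C)
    (hA : A = stmt10Borel α 0) (hB : B = stmt10Borel α 1) (n m : ℕ) :
    stmt10Borel (α ^ n) ((α : C) ^ (n + m)) ∈ Subgroup.closure {A, B} := by
  have hAm : A ∈ Subgroup.closure {A, B} := Subgroup.subset_closure (by simp)
  have hBm : B ∈ Subgroup.closure {A, B} := Subgroup.subset_closure (by simp)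
  have key : stmt10Borel (α ^ n) ((α : C) ^ (n + m))
      = A ^ n * (A ^ m * (B * A⁻¹) * (A ^ m)⁻¹) := by
    rw [hA, hB, stmt10Borel_pow, stmt10Borel_inv, stmt10Borel_pow, stmt10Borel_inv,
      stmt10Borel_mul, stmt10Borel_mul, stmt10Borel_mul, stmt10Borel_mul]
    congr 1
    · group
    · have hα0 : (α : C) ≠ 0 := α.ne_zero
      push_cast
      field_simp
      ring
  rw [key]
  exact Subgroup.mul_mem _ (Subgroup.pow_mem _ hAm n)
    (Subgroup.mul_mem _ (Subgroup.mul_mem _ (Subgroup.pow_mem _ hAm m)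
      (Subgroup.mul_mem _ hBm (Subgroup.inv_mem _ hAm))) (Subgroup.inv_mem _ (Subgroup.pow_mem _ hAm m)))

lemma stmt10_extend {C : Type*} [Field C] (f : MvPolynomial (Fin 2 × Fin 2) C)
    (i₀ : Fin 2 × Fin 2) (c : Fin 2 × Fin 2 → C) (D : Set C) (hD : D.Infinite)
    (h : ∀ y ∈ D, MvPolynomial.eval (Function.update c i₀ y) f = 0) :
    ∀ y : C, MvPolynomial.eval (Function.update c i₀ y) f = 0 := by
  set p : Polynomial C :=
    MvPolynomial.aeval (Function.update (fun q => Polynomial.C (c q)) i₀ Polynomial.X) f with hp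
  have key : ∀ y, Polynomial.eval y p = MvPolynomial.eval (Function.update c i₀ y) f := by
    intro y
    rw [hp, MvPolynomial.aeval_def, Polynomial.algebraMap_eq]
    rw [show Polynomial.eval y (MvPolynomial.eval₂ Polynomial.C
        (Function.update (fun q => Polynomial.C (c q)) i₀ Polynomial.X) f)
      = (Polynomial.evalRingHom y) (MvPolynomial.eval₂ Polynomial.C
        (Function.update (fun q => Polynomial.C (c q)) i₀ Polynomial.X) f) from rfl]
    rw [MvPolynomial.eval₂_comp_left]
    have h1 : (Polynomial.evalRingHom y).comp Polynomial.C = RingHom.id C := by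
      ext x; simp
    have h2 : ⇑(Polynomial.evalRingHom y) ∘
        (Function.update (fun q => Polynomial.C (c q)) i₀ Polynomial.X)
        = Function.update c i₀ y := by
      funext q
      by_cases hq : q = i₀ <;> simp [hq, Function.update]
    rw [h1, h2]
    rfl
  have hp0 : p = 0 := by
    apply Polynomial.eq_zero_of_infinite_isRoot
    apply hD.mono
    intro y hy
    show Polynomial.IsRoot p y
    rw [Polynomial.IsRoot, key]
    exact h y hy
  intro y
  rw [← key, hp0, Polynomial.eval_zero]



open Matrix

/-- Let `C` be an algebraically closed field and `α ∈ C*` not a root of unity. The Zariski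
closure in `GL_2(C)` of the subgroup `H` generated by `[[α,0],[0,1]]` and `[[α,1],[0,1]]`
is exactly the Borel-type group `B = {[[a,b],[0,1]] : a ∈ C*, b ∈ C}`: an element
`g ∈ GL_2(C)` lies in the Zariski closure of `H` (every polynomial in the matrix entries
vanishing on `H` vanishes at `g`) if and only if `g` has the form `[[a,b],[0,1]]`,
i.e. `g₁₀ = 0` and `g₁₁ = 1`. -/
theorem stmt10 (C : Type*) [Field C] [IsAlgClosed C] (α : Cˣ)
    (hα : ∀ n : ℕ, 0 < n → α ^ n ≠ 1) (A B : GL (Fin 2) C)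
    (hA : (A : Matrix (Fin 2) (Fin 2) C) = !![(α : C), 0; 0, 1])
    (hB : (B : Matrix (Fin 2) (Fin 2) C) = !![(α : C), 1; 0, 1]) :
    ∀ g : GL (Fin 2) C,
      (∀ f : MvPolynomial (Fin 2 × Fin 2) C,
        (∀ h : GL (Fin 2) C, h ∈ Subgroup.closure {A, B} →
          MvPolynomial.eval (fun q => (h : Matrix (Fin 2) (Fin 2) C) q.1 q.2) f = 0) →
        MvPolynomial.eval (fun q => (g : Matrix (Fin 2) (Fin 2) C) q.1 q.2) f = 0) ↔
      ((g : Matrix (Fin 2) (Fin 2) C) 1 0 = 0 ∧ (g : Matrix (Fin 2) (Fin 2) C) 1 1 = 1) := by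
  intro g
  constructor
  · -- forward direction
    intro hg
    have struct : ∀ h : GL (Fin 2) C, h ∈ Subgroup.closure {A, B} →
        (h : Matrix (Fin 2) (Fin 2) C) 1 0 = 0 ∧ (h : Matrix (Fin 2) (Fin 2) C) 1 1 = 1 := by
      intro h hh
      induction hh using Subgroup.closure_induction with
      | mem x hx =>
        rcases hx with hx | hx <;> subst hx
        · rw [hA]; constructor <;> simp
        · rw [hB]; constructor <;> simp
      | one => constructor <;> simp
      | mul x y hx hy ihx ihy =>
        have hxy : ((x * y : GL (Fin 2) C) : Matrix (Fin 2) (Fin 2) C)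
            = (x : Matrix (Fin 2) (Fin 2) C) * (y : Matrix (Fin 2) (Fin 2) C) := rfl
        constructor
        · rw [hxy]
          rw [Matrix.mul_apply, Fin.sum_univ_two, ihx.1, ihx.2]
          simp [ihy.1]
        · rw [hxy]
          rw [Matrix.mul_apply, Fin.sum_univ_two, ihx.1, ihx.2]
          simp [ihy.2]
      | inv x hx ihx =>
        have h1 : (x : Matrix (Fin 2) (Fin 2) C) * ((x⁻¹ : GL (Fin 2) C) : Matrix (Fin 2) (Fin 2) C) = 1 := by
          rw [← Units.val_mul, mul_inv_cancel, Units.val_one]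
        constructor
        · have := congrArg (fun M => M 1 0) h1
          simp only [Matrix.mul_apply, Fin.sum_univ_two] at this
          rw [ihx.1, ihx.2] at this
          simpa using this
        · have := congrArg (fun M => M 1 1) h1
          simp only [Matrix.mul_apply, Fin.sum_univ_two] at this
          rw [ihx.1, ihx.2] at this
          simpa using this
    constructor
    · have := hg (MvPolynomial.X ((1 : Fin 2), (0 : Fin 2))) (by
        intro h hh
        rw [MvPolynomial.eval_X]
        exact (struct h hh).1)
      rwa [MvPolynomial.eval_X] at this
    · have := hg (MvPolynomial.X ((1 : Fin 2), (1 : Fin 2)) - 1) (by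
        intro h hh
        rw [map_sub, MvPolynomial.eval_X, (struct h hh).2]
        simp)
      rw [map_sub, MvPolynomial.eval_X, _root_.map_one, sub_eq_zero] at this
      exact this
  · rintro ⟨h10, h11⟩ f hf
    have hA' : A = stmt10Borel α 0 := Units.ext (by rw [stmt10Borel_val]; exact hA)
    have hB' : B = stmt10Borel α 1 := Units.ext (by rw [stmt10Borel_val]; exact hB)
    have hane : ∀ i j : ℕ, i < j → ((α : C) ^ i ≠ (α : C) ^ j) := by
      intro i j hij he
      have h1 : (α : Cˣ) ^ i = α ^ j := Units.ext (by simpa [Units.val_pow_eq_pow_val] using he)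
      have h2 : α ^ i * α ^ (j - i) = α ^ i * 1 := by
        rw [mul_one, ← pow_add, Nat.add_sub_cancel' hij.le, h1]
      exact hα (j - i) (by omega) (mul_left_cancel h2)
    have hinj : Function.Injective (fun m : ℕ => (α : C) ^ m) := by
      intro i j hij
      by_contra hne
      rcases Nat.lt_or_gt_of_ne hne with h | h
      · exact hane i j h hij
      · exact hane j i h hij.symm
    have hvan : ∀ n m : ℕ,
        MvPolynomial.eval (fun q : Fin 2 × Fin 2 =>
          (!![(α : C) ^ n, (α : C) ^ (n + m); 0, 1] : Matrix (Fin 2) (Fin 2) C) q.1 q.2) f = 0 := by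
      intro n m
      have := hf _ (stmt10_mem α A B hA' hB' n m)
      simpa [stmt10Borel_val, Units.val_pow_eq_pow_val] using this
    have step1 : ∀ n : ℕ, ∀ y : C,
        MvPolynomial.eval (Function.update
          (fun q : Fin 2 × Fin 2 => (!![(α : C) ^ n, 0; 0, 1] : Matrix (Fin 2) (Fin 2) C) q.1 q.2)
          ((0 : Fin 2), (1 : Fin 2)) y) f = 0 := by
      intro n
      apply stmt10_extend f _ _ (Set.range fun m : ℕ => (α : C) ^ (n + m))
      · apply Set.infinite_range_of_injective
        intro i j hij
        have := hinj hij
        omega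
      · rintro y ⟨m, rfl⟩
        have hv := hvan n m
        have hfun : Function.update
            (fun q : Fin 2 × Fin 2 => (!![(α : C) ^ n, 0; 0, 1] : Matrix (Fin 2) (Fin 2) C) q.1 q.2)
            ((0 : Fin 2), (1 : Fin 2)) ((α : C) ^ (n + m))
            = fun q : Fin 2 × Fin 2 =>
              (!![(α : C) ^ n, (α : C) ^ (n + m); 0, 1] : Matrix (Fin 2) (Fin 2) C) q.1 q.2 := by
          funext q
          obtain ⟨i, j⟩ := q
          fin_cases i <;> fin_cases j <;> simp [Function.update, Prod.ext_iff]
        rw [hfun]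
        exact hv
    have step2 : ∀ x : C,
        MvPolynomial.eval (Function.update
          (fun q : Fin 2 × Fin 2 =>
            (!![0, (g : Matrix (Fin 2) (Fin 2) C) 0 1; 0, 1] : Matrix (Fin 2) (Fin 2) C) q.1 q.2)
          ((0 : Fin 2), (0 : Fin 2)) x) f = 0 := by
      apply stmt10_extend f _ _ (Set.range fun n : ℕ => (α : C) ^ n)
      · exact Set.infinite_range_of_injective hinj
      · rintro x ⟨n, rfl⟩
        have hs := step1 n ((g : Matrix (Fin 2) (Fin 2) C) 0 1)
        have hfun : Function.update
            (fun q : Fin 2 × Fin 2 =>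
              (!![0, (g : Matrix (Fin 2) (Fin 2) C) 0 1; 0, 1] : Matrix (Fin 2) (Fin 2) C) q.1 q.2)
            ((0 : Fin 2), (0 : Fin 2)) ((α : C) ^ n)
            = Function.update
            (fun q : Fin 2 × Fin 2 => (!![(α : C) ^ n, 0; 0, 1] : Matrix (Fin 2) (Fin 2) C) q.1 q.2)
            ((0 : Fin 2), (1 : Fin 2)) ((g : Matrix (Fin 2) (Fin 2) C) 0 1) := by
          funext q
          obtain ⟨i, j⟩ := q
          fin_cases i <;> fin_cases j <;> simp [Function.update, Prod.ext_iff]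
        rw [hfun]
        exact hs
    have hfin := step2 ((g : Matrix (Fin 2) (Fin 2) C) 0 0)
    have hfun : (fun q : Fin 2 × Fin 2 => (g : Matrix (Fin 2) (Fin 2) C) q.1 q.2)
        = Function.update
          (fun q : Fin 2 × Fin 2 =>
            (!![0, (g : Matrix (Fin 2) (Fin 2) C) 0 1; 0, 1] : Matrix (Fin 2) (Fin 2) C) q.1 q.2)
          ((0 : Fin 2), (0 : Fin 2)) ((g : Matrix (Fin 2) (Fin 2) C) 0 0) := by
      funext q
      obtain ⟨i, j⟩ := q
      fin_cases i <;> fin_cases j <;> simp [Function.update, Prod.ext_iff, h10, h11]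
    rw [hfun]
    exact hfin
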